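/- Fix integers k ≥ 1 and n ≥ 0 and weights w : ℕ → ℝ (indexed from 1). Then Σ_{(P_1,…,P_k) ∈ A_n} ∏_{j=1}^k f_w(P_j) = (∏_{j=1}^k ∏_{m=1}^{2(j−1)} w(m)²) · Σ_{(h_1,…,h_k) ∈ B_n} ∏_{j=1}^k f_{θ^{2j−2}(w)}(h_j). -/

import Mathlib

/-- Dyck-path height functions of length `2N`, encoded as `h : ℕ → ℕ` with
`h 0 = 0`, steps `±1` up to index `2N`, and extended by `0` beyond `2N`. -/
def DyckN (N : ℕ) : Set (ℕ → ℕ) :=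
  {h | h 0 = 0 ∧ (∀ i : ℕ, 2 * N ≤ i → h i = 0) ∧
    ∀ i : ℕ, i < 2 * N → (h (i + 1) = h i + 1 ∨ h i = h (i + 1) + 1)}

/-- The weight `f_w` of a Dyck path of length `2N` with heights `h`: the product
over the steps of `w` evaluated at the larger endpoint height. -/
def fw (w : ℕ → ℝ) (N : ℕ) (h : ℕ → ℕ) : ℝ :=
  ∏ i ∈ Finset.range (2 * N), w (max (h i) (h (i + 1)))

/-- `A_n`: `k`-tuples of pairwise non-intersecting Dyck paths, where the `j`-th
path (`j : Fin k` zero-indexed) starts at `(-2j, 0)` and has length `2n + 4j`;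
its lattice points are `(i - 2j, P j i)` for `0 ≤ i ≤ 2(n + 2j)`. -/
def Aset (k n : ℕ) : Set (Fin k → ℕ → ℕ) :=
  {P | (∀ j : Fin k, P j ∈ DyckN (n + 2 * (j : ℕ))) ∧
    ∀ j j' : Fin k, j ≠ j' → ∀ i i' : ℕ,
      i ≤ 2 * (n + 2 * (j : ℕ)) → i' ≤ 2 * (n + 2 * (j' : ℕ)) →
      (i : ℤ) - 2 * (j : ℕ) = (i' : ℤ) - 2 * (j' : ℕ) → P j i ≠ P j' i'}

/-- `B_n`: `k`-tuples of Dyck-path height functions of length `2n` that are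
pointwise ordered: `h_j(i) ≤ h_{j'}(i)` whenever `j ≤ j'`. -/
def BsetN (k n : ℕ) : Set (Fin k → ℕ → ℕ) :=
  {H | (∀ j : Fin k, H j ∈ DyckN n) ∧
    ∀ j j' : Fin k, j ≤ j' → ∀ i : ℕ, H j i ≤ H j' i}

namespace Stmt11Aux

/-! ### Generic walk lemmas -/

lemma walk_le {h : ℕ → ℕ} {N : ℕ}
    (hs : ∀ i : ℕ, i < 2 * N → (h (i + 1) = h i + 1 ∨ h i = h (i + 1) + 1)) :
    ∀ a m : ℕ, a + m ≤ 2 * N → h (a + m) ≤ h a + m ∧ h a ≤ h (a + m) + m := by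
  intro a m
  induction m with
  | zero => simp
  | succ m ih =>
    intro hle
    have h1 := ih (by omega)
    have h2 := hs (a + m) (by omega)
    have e : a + (m + 1) = (a + m) + 1 := by omega
    rw [e]
    omega

lemma walk_parity {h : ℕ → ℕ} {N : ℕ} (h0 : h 0 = 0)
    (hs : ∀ i : ℕ, i < 2 * N → (h (i + 1) = h i + 1 ∨ h i = h (i + 1) + 1)) :
    ∀ i : ℕ, i ≤ 2 * N → h i % 2 = i % 2 := by
  intro i
  induction i with
  | zero => intro _; simp [h0]
  | succ i ih =>
    intro hle
    have h1 := ih (by omega)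
    have h2 := hs i (by omega)
    omega

/-! ### Separation of non-intersecting paths -/

lemma sep {k n : ℕ} {P : Fin k → ℕ → ℕ} (hP : P ∈ Aset k n)
    {j j' : Fin k} (hjj : (j : ℕ) < (j' : ℕ)) :
    ∀ i : ℕ, i ≤ 2 * (n + 2 * (j : ℕ)) →
      P j i + 2 ≤ P j' (i + 2 * ((j' : ℕ) - (j : ℕ))) := by
  obtain ⟨hD, hNI⟩ := hP
  have hne : j ≠ j' := by
    intro e; rw [e] at hjj; omega
  have hpar : ∀ (a : Fin k) (i : ℕ), i ≤ 2 * (n + 2 * (a : ℕ)) → P a i % 2 = i % 2 :=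
    fun a => walk_parity (hD a).1 (hD a).2.2
  intro i
  induction i with
  | zero =>
    intro _
    have h0 : P j 0 = 0 := (hD j).1
    have hle : 0 + 2 * ((j' : ℕ) - (j : ℕ)) ≤ 2 * (n + 2 * (j' : ℕ)) := by omega
    have hni := hNI j j' hne 0 (0 + 2 * ((j' : ℕ) - (j : ℕ))) (by omega) hle
      (by push_cast; omega)
    have hp := hpar j' (0 + 2 * ((j' : ℕ) - (j : ℕ))) hle
    omega
  | succ i ih =>
    intro hle
    have h1 := ih (by omega)
    have hsj := (hD j).2.2 i (by omega)
    have hsj' := (hD j').2.2 (i + 2 * ((j' : ℕ) - (j : ℕ))) (by omega)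
    have e : i + 2 * ((j' : ℕ) - (j : ℕ)) + 1 = i + 1 + 2 * ((j' : ℕ) - (j : ℕ)) := by omega
    rw [e] at hsj'
    have hni := hNI j j' hne (i + 1) (i + 1 + 2 * ((j' : ℕ) - (j : ℕ))) (by omega)
      (by omega) (by push_cast; omega)
    have hp1 := hpar j (i + 1) (by omega)
    have hp2 := hpar j' (i + 1 + 2 * ((j' : ℕ) - (j : ℕ))) (by omega)
    omega

lemma chain {k n : ℕ} {P : Fin k → ℕ → ℕ} (hP : P ∈ Aset k n) :
    ∀ (m : ℕ) (j j' : Fin k), (j' : ℕ) = (j : ℕ) + m → ∀ i : ℕ, i ≤ 2 * n →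
      P j (i + 2 * (j : ℕ)) + 2 * m ≤ P j' (i + 2 * (j' : ℕ)) := by
  intro m
  induction m with
  | zero =>
    intro j j' he i hi
    obtain rfl : j = j' := Fin.ext (by omega)
    omega
  | succ m ih =>
    intro j j' he i hi
    have hlt : (j : ℕ) + m < k := by have := j'.isLt; omega
    set jm : Fin k := ⟨(j : ℕ) + m, hlt⟩ with hjm
    have hjmv : (jm : ℕ) = (j : ℕ) + m := rfl
    have h1 := ih j jm hjmv.symm i hi
    have h2 := sep ⟨hP.1, hP.2⟩ (show (jm : ℕ) < (j' : ℕ) by omega)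
      (i + 2 * (jm : ℕ)) (by omega)
    have e : i + 2 * (jm : ℕ) + 2 * ((j' : ℕ) - (jm : ℕ)) = i + 2 * (j' : ℕ) := by omega
    rw [e] at h2
    omega

lemma lb {k n : ℕ} {P : Fin k → ℕ → ℕ} (hP : P ∈ Aset k n) (hk : 1 ≤ k) (j : Fin k) :
    ∀ i : ℕ, i ≤ 2 * n → 2 * (j : ℕ) ≤ P j (i + 2 * (j : ℕ)) := by
  intro i hi
  have := chain hP (j : ℕ) ⟨0, hk⟩ j (by simp) i hi
  omega

lemma ramp_left {k n : ℕ} {P : Fin k → ℕ → ℕ} (hP : P ∈ Aset k n) (hk : 1 ≤ k)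
    (j : Fin k) : ∀ i : ℕ, i ≤ 2 * (j : ℕ) → P j i = i := by
  intro i hi
  have hD := hP.1 j
  have w1 := walk_le hD.2.2 0 i (by omega)
  rw [Nat.zero_add] at w1
  have w2 := walk_le hD.2.2 i (2 * (j : ℕ) - i) (by omega)
  rw [show i + (2 * (j : ℕ) - i) = 0 + 2 * (j : ℕ) from by omega] at w2
  have lb0 := lb hP hk j 0 (by omega)
  have h0 := hD.1
  omega

lemma ramp_right {k n : ℕ} {P : Fin k → ℕ → ℕ} (hP : P ∈ Aset k n) (hk : 1 ≤ k)
    (j : Fin k) : ∀ i : ℕ, 2 * n + 2 * (j : ℕ) ≤ i → P j i = 2 * (n + 2 * (j : ℕ)) - i := by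
  intro i hi
  have hD := hP.1 j
  by_cases hc : i ≤ 2 * (n + 2 * (j : ℕ))
  · have w2 := walk_le hD.2.2 i (2 * (n + 2 * (j : ℕ)) - i) (by omega)
    rw [show i + (2 * (n + 2 * (j : ℕ)) - i) = 2 * (n + 2 * (j : ℕ)) from by omega] at w2
    have hend : P j (2 * (n + 2 * (j : ℕ))) = 0 := hD.2.1 _ le_rfl
    have lbv := lb hP hk j (2 * n) le_rfl
    have w3 := walk_le hD.2.2 (2 * n + 2 * (j : ℕ)) (i - (2 * n + 2 * (j : ℕ))) (by omega)
    rw [show 2 * n + 2 * (j : ℕ) + (i - (2 * n + 2 * (j : ℕ))) = i from by omega] at w3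
    omega
  · have := hD.2.1 i (by omega)
    omega

/-! ### The bijection -/

def phi (n : ℕ) (h : ℕ → ℕ) (j : ℕ) (i : ℕ) : ℕ :=
  if i < 2 * j then i
  else if i ≤ 2 * j + 2 * n then h (i - 2 * j) + 2 * j
  else 2 * (n + 2 * j) - i

def Phi (k n : ℕ) (H : Fin k → ℕ → ℕ) : Fin k → ℕ → ℕ :=
  fun j i => phi n (H j) (j : ℕ) i

def Psi (k n : ℕ) (P : Fin k → ℕ → ℕ) : Fin k → ℕ → ℕ :=
  fun j i => if i ≤ 2 * n then P j (i + 2 * (j : ℕ)) - 2 * (j : ℕ) else 0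

lemma phi_low {n j i : ℕ} {h : ℕ → ℕ} (h0 : h 0 = 0) (hi : i ≤ 2 * j) :
    phi n h j i = i := by
  unfold phi
  split_ifs with h1 h2
  · rfl
  · rw [show i - 2 * j = 0 from by omega, h0]; omega
  · omega

lemma phi_mid {n j i : ℕ} (h : ℕ → ℕ) (h1 : 2 * j ≤ i) (h2 : i ≤ 2 * j + 2 * n) :
    phi n h j i = h (i - 2 * j) + 2 * j := by
  unfold phi
  rw [if_neg (by omega), if_pos h2]

lemma phi_high {n j i : ℕ} {h : ℕ → ℕ} (hend : h (2 * n) = 0) (hi : 2 * n + 2 * j ≤ i) :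
    phi n h j i = 2 * (n + 2 * j) - i := by
  unfold phi
  split_ifs with h1 h2
  · omega
  · rw [show i - 2 * j = 2 * n from by omega, hend]; omega
  · rfl

lemma phi_step {n j : ℕ} {h : ℕ → ℕ} (h0 : h 0 = 0) (hend : ∀ x, 2 * n ≤ x → h x = 0)
    (hs : ∀ x, x < 2 * n → (h (x + 1) = h x + 1 ∨ h x = h (x + 1) + 1)) :
    ∀ i, i < 2 * (n + 2 * j) →
      (phi n h j (i + 1) = phi n h j i + 1 ∨ phi n h j i = phi n h j (i + 1) + 1) := by
  intro i hi
  rcases Nat.lt_or_ge i (2 * j) with c1 | c1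
  · rw [phi_low h0 (by omega), phi_low h0 (by omega)]
    left; rfl
  · rcases Nat.lt_or_ge i (2 * j + 2 * n) with c2 | c2
    · rw [phi_mid h (by omega) (by omega), phi_mid h (by omega) (by omega)]
      rw [show i + 1 - 2 * j = (i - 2 * j) + 1 from by omega]
      rcases hs (i - 2 * j) (by omega) with hst | hst
      · left; omega
      · right; omega
    · rw [phi_high (hend _ le_rfl) (by omega), phi_high (hend _ le_rfl) (by omega)]
      right; omega

lemma phi_lt {k n : ℕ} {H : Fin k → ℕ → ℕ} (hH : H ∈ BsetN k n)
    {j j' : Fin k} (hjj : (j : ℕ) < (j' : ℕ)) (i : ℕ) (hi : i ≤ 2 * (n + 2 * (j : ℕ))) :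
    Phi k n H j i < Phi k n H j' (i + 2 * ((j' : ℕ) - (j : ℕ))) := by
  obtain ⟨hD, hord⟩ := hH
  have hord' : ∀ x, H j x ≤ H j' x := hord j j' (by rw [Fin.le_def]; omega)
  show phi n (H j) (j : ℕ) i < phi n (H j') (j' : ℕ) (i + 2 * ((j' : ℕ) - (j : ℕ)))
  rcases Nat.lt_or_ge i (2 * (j : ℕ)) with c1 | c1
  · rw [phi_low (hD j).1 (by omega), phi_low (hD j').1 (by omega)]
    omega
  · rcases Nat.lt_or_ge i (2 * (j : ℕ) + 2 * n) with c2 | c2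
    · rw [phi_mid (H j) (by omega) (by omega), phi_mid (H j') (by omega) (by omega)]
      rw [show i + 2 * ((j' : ℕ) - (j : ℕ)) - 2 * (j' : ℕ) = i - 2 * (j : ℕ) from by omega]
      have := hord' (i - 2 * (j : ℕ))
      omega
    · rw [phi_high ((hD j).2.1 (2 * n) le_rfl) (by omega),
        phi_high ((hD j').2.1 (2 * n) le_rfl) (by omega)]
      omega

lemma Phi_mem {k n : ℕ} {H : Fin k → ℕ → ℕ} (hH : H ∈ BsetN k n) :
    Phi k n H ∈ Aset k n := by
  obtain ⟨hD, hord⟩ := hH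
  constructor
  · intro j
    refine ⟨?_, ?_, ?_⟩
    · show phi n (H j) (j : ℕ) 0 = 0
      rw [phi_low (hD j).1 (by omega)]
    · intro i hi
      show phi n (H j) (j : ℕ) i = 0
      unfold phi
      split_ifs with h1 h2
      · omega
      · have : H j (i - 2 * (j : ℕ)) = 0 := (hD j).2.1 _ (by omega)
        omega
      · omega
    · intro i hi
      exact phi_step (hD j).1 (hD j).2.1 (hD j).2.2 i hi
  · intro j j' hne i i' hi hi' hco
    have hvne : (j : ℕ) ≠ (j' : ℕ) := fun e => hne (Fin.ext e)
    rcases Nat.lt_or_ge (j : ℕ) (j' : ℕ) with hlt | hge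
    · have hii : i' = i + 2 * ((j' : ℕ) - (j : ℕ)) := by omega
      rw [hii]
      exact Nat.ne_of_lt (phi_lt ⟨hD, hord⟩ hlt i hi)
    · have hlt' : (j' : ℕ) < (j : ℕ) := by omega
      have hii : i = i' + 2 * ((j : ℕ) - (j' : ℕ)) := by omega
      rw [hii]
      exact Nat.ne_of_gt (phi_lt ⟨hD, hord⟩ hlt' i' hi')

lemma Phi_injOn {k n : ℕ} : Set.InjOn (Phi k n) (BsetN k n) := by
  intro H hH H' hH' he
  funext j i
  by_cases hi : i ≤ 2 * n
  · have e1 : Phi k n H j (i + 2 * (j : ℕ)) = H j i + 2 * (j : ℕ) := by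
      show phi n (H j) (j : ℕ) (i + 2 * (j : ℕ)) = H j i + 2 * (j : ℕ)
      rw [phi_mid (H j) (by omega) (by omega),
        show i + 2 * (j : ℕ) - 2 * (j : ℕ) = i from by omega]
    have e2 : Phi k n H' j (i + 2 * (j : ℕ)) = H' j i + 2 * (j : ℕ) := by
      show phi n (H' j) (j : ℕ) (i + 2 * (j : ℕ)) = H' j i + 2 * (j : ℕ)
      rw [phi_mid (H' j) (by omega) (by omega),
        show i + 2 * (j : ℕ) - 2 * (j : ℕ) = i from by omega]
    have := congrFun (congrFun he j) (i + 2 * (j : ℕ))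
    rw [e1, e2] at this
    omega
  · rw [(hH.1 j).2.1 i (by omega), (hH'.1 j).2.1 i (by omega)]

lemma Psi_mem {k n : ℕ} (hk : 1 ≤ k) {P : Fin k → ℕ → ℕ} (hP : P ∈ Aset k n) :
    Psi k n P ∈ BsetN k n := by
  constructor
  · intro j
    refine ⟨?_, ?_, ?_⟩
    · show (if 0 ≤ 2 * n then P j (0 + 2 * (j : ℕ)) - 2 * (j : ℕ) else 0) = 0
      rw [if_pos (by omega), Nat.zero_add, ramp_left hP hk j (2 * (j : ℕ)) le_rfl]
      omega
    · intro i hi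
      show (if i ≤ 2 * n then P j (i + 2 * (j : ℕ)) - 2 * (j : ℕ) else 0) = 0
      split_ifs with h1
      · have : i = 2 * n := by omega
        subst this
        rw [ramp_right hP hk j (2 * n + 2 * (j : ℕ)) le_rfl]
        omega
      · rfl
    · intro i hi
      show (if i + 1 ≤ 2 * n then P j (i + 1 + 2 * (j : ℕ)) - 2 * (j : ℕ) else 0) =
          (if i ≤ 2 * n then P j (i + 2 * (j : ℕ)) - 2 * (j : ℕ) else 0) + 1 ∨
        (if i ≤ 2 * n then P j (i + 2 * (j : ℕ)) - 2 * (j : ℕ) else 0) =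
          (if i + 1 ≤ 2 * n then P j (i + 1 + 2 * (j : ℕ)) - 2 * (j : ℕ) else 0) + 1
      rw [if_pos (by omega), if_pos (by omega)]
      have hst := (hP.1 j).2.2 (i + 2 * (j : ℕ)) (by omega)
      rw [show i + 2 * (j : ℕ) + 1 = i + 1 + 2 * (j : ℕ) from by omega] at hst
      have lb1 := lb hP hk j i (by omega)
      have lb2 := lb hP hk j (i + 1) (by omega)
      omega
  · intro j j' hjj i
    show (if i ≤ 2 * n then P j (i + 2 * (j : ℕ)) - 2 * (j : ℕ) else 0) ≤
      (if i ≤ 2 * n then P j' (i + 2 * (j' : ℕ)) - 2 * (j' : ℕ) else 0)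
    split_ifs with h1
    · have hle : (j : ℕ) ≤ (j' : ℕ) := Fin.le_def.mp hjj
      have hch := chain hP ((j' : ℕ) - (j : ℕ)) j j' (by omega) i h1
      have lb1 := lb hP hk j i h1
      omega
    · exact le_rfl

lemma Phi_Psi {k n : ℕ} (hk : 1 ≤ k) {P : Fin k → ℕ → ℕ} (hP : P ∈ Aset k n) :
    Phi k n (Psi k n P) = P := by
  funext j i
  have hPsi0 : Psi k n P j 0 = 0 := ((Psi_mem hk hP).1 j).1
  have hPsiend : Psi k n P j (2 * n) = 0 := ((Psi_mem hk hP).1 j).2.1 (2 * n) le_rfl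
  show phi n (Psi k n P j) (j : ℕ) i = P j i
  rcases Nat.lt_or_ge i (2 * (j : ℕ)) with c1 | c1
  · rw [phi_low hPsi0 (by omega), ramp_left hP hk j i (by omega)]
  · rcases Nat.lt_or_ge i (2 * (j : ℕ) + 2 * n) with c2 | c2
    · rw [phi_mid _ (by omega) (by omega)]
      show (if i - 2 * (j : ℕ) ≤ 2 * n then
          P j (i - 2 * (j : ℕ) + 2 * (j : ℕ)) - 2 * (j : ℕ) else 0) + 2 * (j : ℕ) = P j i
      rw [if_pos (by omega), show i - 2 * (j : ℕ) + 2 * (j : ℕ) = i from by omega]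
      have lb1 := lb hP hk j (i - 2 * (j : ℕ)) (by omega)
      rw [show i - 2 * (j : ℕ) + 2 * (j : ℕ) = i from by omega] at lb1
      omega
    · rw [phi_high hPsiend (by omega), ramp_right hP hk j i (by omega)]

/-! ### Weights -/

lemma fw_phi (w : ℕ → ℝ) (n j : ℕ) {h : ℕ → ℕ} (h0 : h 0 = 0) (hend : h (2 * n) = 0) :
    fw w (n + 2 * j) (phi n h j) =
      (∏ m ∈ Finset.range (2 * j), w (m + 1) ^ 2) * fw (fun m => w (m + 2 * j)) n h := by
  unfold fw
  rw [show 2 * (n + 2 * j) = 2 * j + (2 * n + 2 * j) from by ring, Finset.prod_range_add,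
    Finset.prod_range_add]
  have hA : ∀ i ∈ Finset.range (2 * j),
      w (max (phi n h j i) (phi n h j (i + 1))) = w (i + 1) := by
    intro i hi
    rw [Finset.mem_range] at hi
    rw [phi_low h0 (by omega), phi_low h0 (by omega), max_eq_right (Nat.le_succ i)]
  have hB : ∀ i ∈ Finset.range (2 * n),
      w (max (phi n h j (2 * j + i)) (phi n h j (2 * j + i + 1))) =
        w (max (h i) (h (i + 1)) + 2 * j) := by
    intro i hi
    rw [Finset.mem_range] at hi
    rw [phi_mid h (by omega) (by omega), phi_mid h (by omega) (by omega),
      show 2 * j + i - 2 * j = i from by omega,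
      show 2 * j + i + 1 - 2 * j = i + 1 from by omega]
    congr 1
    omega
  have hC : ∀ i ∈ Finset.range (2 * j),
      w (max (phi n h j (2 * j + (2 * n + i))) (phi n h j (2 * j + (2 * n + i) + 1))) =
        w (2 * j - i) := by
    intro i hi
    rw [Finset.mem_range] at hi
    rw [phi_high hend (by omega), phi_high hend (by omega)]
    congr 1
    omega
  rw [Finset.prod_congr rfl hA, Finset.prod_congr rfl hB, Finset.prod_congr rfl hC]
  have hrefl : (∏ i ∈ Finset.range (2 * j), w (2 * j - i)) =
      ∏ m ∈ Finset.range (2 * j), w (m + 1) := by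
    rw [← Finset.prod_range_reflect (fun m => w (m + 1)) (2 * j)]
    refine Finset.prod_congr rfl fun i hi => ?_
    rw [Finset.mem_range] at hi
    congr 1
    omega
  rw [hrefl]
  have : (∏ m ∈ Finset.range (2 * j), w (m + 1) ^ 2) =
      (∏ m ∈ Finset.range (2 * j), w (m + 1)) * ∏ m ∈ Finset.range (2 * j), w (m + 1) := by
    rw [← Finset.prod_mul_distrib]
    refine Finset.prod_congr rfl fun m _ => ?_
    ring
  rw [this]
  ring

/-! ### finsum plumbing -/

lemma finsum_mem_const_mul {α : Type*} (s : Set α) (c : ℝ) (f : α → ℝ) :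
    ∑ᶠ x ∈ s, c * f x = c * ∑ᶠ x ∈ s, f x := by
  rcases eq_or_ne c 0 with rfl | hc
  · simp
  · rw [finsum_mem_def, finsum_mem_def]
    have hind : (Set.indicator s fun x => c * f x) = fun x => c * Set.indicator s f x := by
      funext x
      exact Set.indicator_const_mul s f c x
    rw [hind]
    by_cases hfin : (Function.support (Set.indicator s f)).Finite
    · rw [← mul_finsum _ _]
    · have hsup : (Function.support fun x => c * Set.indicator s f x) =
          Function.support (Set.indicator s f) := by
        ext x
        simp [Function.mem_support, hc]
      rw [finsum_of_infinite_support (by rw [hsup]; exact hfin),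
        finsum_of_infinite_support hfin, mul_zero]

end Stmt11Aux

open Stmt11Aux in
/-- The weighted sum over `A_n` equals
`(∏_j ∏_{m=1}^{2j} w(m)^2)` times the weighted sum over `B_n` with shifted
weights `θ^{2j}(w) = (m ↦ w (m + 2j))` (here `j : Fin k` is zero-indexed). -/
theorem stmt11 (k n : ℕ) (hk : 1 ≤ k) (w : ℕ → ℝ) :
    (∑ᶠ P ∈ Aset k n, ∏ j : Fin k, fw w (n + 2 * (j : ℕ)) (P j))
      = (∏ j : Fin k, ∏ m ∈ Finset.range (2 * (j : ℕ)), (w (m + 1)) ^ 2) *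
        ∑ᶠ H ∈ BsetN k n, ∏ j : Fin k, fw (fun m => w (m + 2 * (j : ℕ))) n (H j) := by
  classical
  have hbij : Set.BijOn (Phi k n) (BsetN k n) (Aset k n) := by
    refine ⟨fun H hH => Phi_mem hH, Phi_injOn, fun P hP => ?_⟩
    exact ⟨Psi k n P, Psi_mem hk hP, Phi_Psi hk hP⟩
  have hkey : ∀ H ∈ BsetN k n,
      ((∏ j : Fin k, ∏ m ∈ Finset.range (2 * (j : ℕ)), (w (m + 1)) ^ 2) *
        ∏ j : Fin k, fw (fun m => w (m + 2 * (j : ℕ))) n (H j)) =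
      ∏ j : Fin k, fw w (n + 2 * (j : ℕ)) (Phi k n H j) := by
    intro H hH
    rw [← Finset.prod_mul_distrib]
    refine (Finset.prod_congr rfl fun j _ => ?_).symm
    exact fw_phi w n (j : ℕ) ((hH.1 j).1) ((hH.1 j).2.1 (2 * n) le_rfl)
  rw [← finsum_mem_eq_of_bijOn (Phi k n) hbij hkey]
  rw [finsum_mem_const_mul]
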